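/- Let Y be a finite set of closed disks (pairwise distinct as pairs (center, radius) with radius ≥ 0) that is shattered by the family H_≥ = {𝒟(h_≥) : h a circle}. Then the image φ(Y) ⊆ ℝ⁷ under the map φ((x, y), r) = (x, y, x·y, x², y², r, r²) has the same cardinality as Y and is shattered by the family H_∪ = {H₁ ∪ H₂ : H₁, H₂ closed halfspaces of ℝ⁷ of the form {z : ⟨w, z⟩ ≥ b}}. Consequently, the VC dimension of the range space (𝒟, H_≥) is at most the VC dimension of (ℝ⁷, H_∪). -/

import Mathlib

open scoped RealInnerProductSpace

noncomputable section

/-- The ground set `𝒟` of closed disks in the plane: pairs `(center, radius)`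
with radius `≥ 0`. -/
def Ddisks : Set (EuclideanSpace ℝ (Fin 2) × ℝ) := {d | 0 ≤ d.2}

/-- `𝒟(h_≥)` for the circle `h = (q, s)`: the disks lying outside `h` or
intersecting the boundary of `h`. -/
def Dge (q : EuclideanSpace ℝ (Fin 2)) (s : ℝ) : Set (EuclideanSpace ℝ (Fin 2) × ℝ) :=
  {d | d ∈ Ddisks ∧ s ≤ dist d.1 q + d.2}

/-- The family `H_≥ = {𝒟(h_≥) : h a circle}`. -/
def Hge : Set (Set (EuclideanSpace ℝ (Fin 2) × ℝ)) :=
  {f | ∃ q s, 0 < s ∧ f = Dge q s}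

/-- A family `F` of subsets of a ground set shatters `Y` if every subset of `Y` is
cut out by some member of `F`. -/
def Shatters {X : Type*} (F : Set (Set X)) (Y : Set X) : Prop :=
  ∀ S ⊆ Y, ∃ f ∈ F, f ∩ Y = S

/-- The monomial lifting map `φ : ℝ² × ℝ → ℝ⁷`. -/
def phiLift (d : EuclideanSpace ℝ (Fin 2) × ℝ) : EuclideanSpace ℝ (Fin 7) :=
  (WithLp.equiv 2 (Fin 7 → ℝ)).symm
    ![d.1 0, d.1 1, d.1 0 * d.1 1, (d.1 0) ^ 2, (d.1 1) ^ 2, d.2, d.2 ^ 2]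

/-- The family `H_∪` of unions of two closed (upper) halfspaces of `ℝ⁷`. -/
def HUnion7 : Set (Set (EuclideanSpace ℝ (Fin 7))) :=
  {f | ∃ (w₁ w₂ : EuclideanSpace ℝ (Fin 7)) (b₁ b₂ : ℝ),
    f = {z | b₁ ≤ ⟪w₁, z⟫} ∪ {z | b₂ ≤ ⟪w₂, z⟫}}

lemma cons_val_5 (a b c d e f g : ℝ) : ![a, b, c, d, e, f, g] 5 = f := rfl
lemma cons_val_6 (a b c d e f g : ℝ) : ![a, b, c, d, e, f, g] 6 = g := rfl
/-- Unit vector in coordinate 5. -/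
def wRad : EuclideanSpace ℝ (Fin 7) :=
  (WithLp.equiv 2 (Fin 7 → ℝ)).symm ![0, 0, 0, 0, 0, 1, 0]

/-- Weight vector for the squared-distance halfspace. -/
def wCirc (q : EuclideanSpace ℝ (Fin 2)) (s : ℝ) : EuclideanSpace ℝ (Fin 7) :=
  (WithLp.equiv 2 (Fin 7 → ℝ)).symm ![-2 * q 0, -2 * q 1, 0, 1, 1, 2 * s, -1]

lemma inner_wRad (d : EuclideanSpace ℝ (Fin 2) × ℝ) : ⟪wRad, phiLift d⟫ = d.2 := by
  simp [PiLp.inner_apply, RCLike.inner_apply, Fin.sum_univ_seven, wRad, phiLift, cons_val_5, cons_val_6]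

lemma inner_wCirc (q : EuclideanSpace ℝ (Fin 2)) (s : ℝ) (d : EuclideanSpace ℝ (Fin 2) × ℝ) :
    ⟪wCirc q s, phiLift d⟫ = -2 * q 0 * d.1 0 + -2 * q 1 * d.1 1 + (d.1 0) ^ 2 + (d.1 1) ^ 2
      + 2 * s * d.2 - d.2 ^ 2 := by
  simp [PiLp.inner_apply, RCLike.inner_apply, Fin.sum_univ_seven, wCirc, phiLift, cons_val_5, cons_val_6]
  ring

lemma dist_sq (x y : EuclideanSpace ℝ (Fin 2)) :
    dist x y ^ 2 = (x 0 - y 0) ^ 2 + (x 1 - y 1) ^ 2 := by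
  rw [EuclideanSpace.dist_eq, Real.sq_sqrt (by positivity)]
  simp [Real.dist_eq, sq_abs, Fin.sum_univ_two]

lemma key (q : EuclideanSpace ℝ (Fin 2)) (s : ℝ) (d : EuclideanSpace ℝ (Fin 2) × ℝ) :
    s ≤ dist d.1 q + d.2 ↔
      (s ≤ ⟪wRad, phiLift d⟫ ∨ s ^ 2 - q 0 ^ 2 - q 1 ^ 2 ≤ ⟪wCirc q s, phiLift d⟫) := by
  rw [inner_wRad, inner_wCirc]
  have hd : (0:ℝ) ≤ dist d.1 q := dist_nonneg
  have hsq := dist_sq d.1 q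
  constructor
  · intro h
    rcases le_or_gt s d.2 with h2 | h2
    · exact Or.inl h2
    · right
      have h3 : (s - d.2) ^ 2 ≤ dist d.1 q ^ 2 := by nlinarith
      nlinarith
  · rintro (h | h)
    · linarith
    · have h3 : (s - d.2) ^ 2 ≤ dist d.1 q ^ 2 := by nlinarith
      nlinarith

lemma phi_inj : Function.Injective phiLift := by
  intro d d' h
  have h' : ∀ i, (WithLp.equiv 2 (Fin 7 → ℝ)) (phiLift d) i
      = (WithLp.equiv 2 (Fin 7 → ℝ)) (phiLift d') i := by
    intro i; rw [h]
  simp only [phiLift, Equiv.apply_symm_apply] at h'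
  have h0 := h' 0; have h1 := h' 1; have h5 := h' 5
  simp at h0 h1 h5
  refine Prod.ext ?_ h5
  ext i
  fin_cases i <;> assumption

lemma main (Y : Set (EuclideanSpace ℝ (Fin 2) × ℝ)) (hYD : Y ⊆ Ddisks)
    (hshat : Shatters Hge Y) :
    (phiLift '' Y).ncard = Y.ncard ∧ Shatters HUnion7 (phiLift '' Y) := by
  refine ⟨Set.ncard_image_of_injective Y phi_inj, ?_⟩
  intro S hS
  set T : Set (EuclideanSpace ℝ (Fin 2) × ℝ) := Y ∩ phiLift ⁻¹' S with hT
  have hTY : T ⊆ Y := Set.inter_subset_left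
  have hST : phiLift '' T = S := by
    apply Set.Subset.antisymm
    · rintro _ ⟨d, ⟨_, hd2⟩, rfl⟩; exact hd2
    · intro z hz
      obtain ⟨d, hdY, rfl⟩ := hS hz
      exact ⟨d, ⟨hdY, hz⟩, rfl⟩
  obtain ⟨f, ⟨q, s, hs, rfl⟩, hf⟩ := hshat T hTY
  refine ⟨{z | s ≤ ⟪wRad, z⟫} ∪ {z | s ^ 2 - q 0 ^ 2 - q 1 ^ 2 ≤ ⟪wCirc q s, z⟫},
    ⟨wRad, wCirc q s, s, s ^ 2 - q 0 ^ 2 - q 1 ^ 2, rfl⟩, ?_⟩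
  rw [← hST]
  apply Set.Subset.antisymm
  · rintro z ⟨hz1, d, hdY, rfl⟩
    have : d ∈ Dge q s := ⟨hYD hdY, (key q s d).2 hz1⟩
    exact ⟨d, hf ▸ ⟨this, hdY⟩, rfl⟩
  · rintro _ ⟨d, hdT, rfl⟩
    have hd : d ∈ Dge q s ∩ Y := hf ▸ hdT
    exact ⟨(key q s d).1 hd.1.2, d, hd.2, rfl⟩

/-- If a finite set `Y` of closed disks is shattered by `H_≥`, then
its image `φ(Y) ⊆ ℝ⁷` has the same cardinality as `Y` and is shattered by the family
of unions of two closed halfspaces of `ℝ⁷`. Consequently, the VC dimension of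
`(𝒟, H_≥)` is at most the VC dimension of `(ℝ⁷, H_∪)`. -/
theorem shattered_lift_to_halfspace_unions
    (Y : Set (EuclideanSpace ℝ (Fin 2) × ℝ)) (hYD : Y ⊆ Ddisks) (hYfin : Y.Finite)
    (hshat : Shatters Hge Y) :
    ((phiLift '' Y).ncard = Y.ncard ∧ Shatters HUnion7 (phiLift '' Y)) ∧
    (∀ n : ℕ, (∃ Y' ⊆ Ddisks, Y'.Finite ∧ Y'.ncard = n ∧ Shatters Hge Y') →
      ∃ Z : Set (EuclideanSpace ℝ (Fin 7)), Z.Finite ∧ Z.ncard = n ∧ Shatters HUnion7 Z) := by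
  refine ⟨main Y hYD hshat, ?_⟩
  rintro n ⟨Y', hY'D, hY'fin, hY'n, hY'shat⟩
  obtain ⟨hcard, hsh⟩ := main Y' hY'D hY'shat
  exact ⟨phiLift '' Y', hY'fin.image _, hcard.trans hY'n, hsh⟩
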